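/- Let $T$ be any tree on $3k$ vertices obtained by taking $k$ vertex-disjoint copies of the path $P_3$ and connecting them into a tree using $k-1$ additional edges. Then the dissociation number of $T$ equals $2k$. -/
import Mathlib


open SimpleGraph Finset

/-- `F` is contained in `G` as a subgraph (an injective adjacency-preserving map). -/
def containsCopy {α β : Type*} (F : SimpleGraph α) (G : SimpleGraph β) : Prop :=
  ∃ f : α ↪ β, ∀ a b, F.Adj a b → G.Adj (f a) (f b)

/-- For even `d` this is the cocktail party graph `CP_d` (complete graph minus the
perfect matching pairing `2j, 2j+1`); for odd `d` it is the odd cocktail party graph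
`L_d = CP_{d-1} ∨ K_1`. -/
def cocktail (d : ℕ) : SimpleGraph (Fin d) :=
  SimpleGraph.fromRel (fun i j => (i : ℕ) / 2 ≠ (j : ℕ) / 2)

/-- `S` is a dissociation set of `G`: every vertex of `S` has at most one neighbor in `S`. -/
def IsDissocSet {V : Type*} (G : SimpleGraph V) (S : Finset V) : Prop :=
  ∀ v ∈ S, ({u | u ∈ S ∧ G.Adj v u}).ncard ≤ 1

/-- The dissociation number of `G`. -/
noncomputable def dissocNum {V : Type*} [Fintype V] (G : SimpleGraph V) : ℕ :=
  sSup {k | ∃ S : Finset V, IsDissocSet G S ∧ S.card = k}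

section Helpers

variable {V : Type*} {G : SimpleGraph V}

private lemma dist_lt_of_mem_support [DecidableEq V] {r u w : V} (p : G.Walk r u)
    (hw : w ∈ p.support) (hne : w ≠ u) : G.dist r w < p.length := by
  have h1 : G.dist r w ≤ (p.takeUntil w hw).length := SimpleGraph.dist_le _
  have h2 := congrArg SimpleGraph.Walk.length (p.take_spec hw)
  rw [SimpleGraph.Walk.length_append] at h2
  have h3 : (p.dropUntil w hw).length ≠ 0 := fun h0 =>
    hne (SimpleGraph.Walk.eq_of_length_eq_zero h0)
  omega

private lemma concat_path {r u v : V} (p : G.Walk r u) (hp : p.IsPath) (h : G.Adj u v)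
    (hv : v ∉ p.support) : (p.concat h).IsPath := by
  rw [← SimpleGraph.Walk.isPath_reverse_iff, SimpleGraph.Walk.reverse_concat,
    SimpleGraph.Walk.cons_isPath_iff]
  refine ⟨hp.reverse, ?_⟩
  rwa [SimpleGraph.Walk.support_reverse, List.mem_reverse]

private lemma tree_adj_dist_ne (ht : G.IsTree) (r : V) {u v : V} (h : G.Adj u v) :
    G.dist r u ≠ G.dist r v := by
  classical
  intro heq
  obtain ⟨p, hp, hpl⟩ := ht.isConnected.exists_path_of_dist r u
  have hvp : v ∉ p.support := by
    intro hv
    have := dist_lt_of_mem_support p hv h.ne'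
    omega
  have hq : (p.concat h).IsPath := concat_path p hp h hvp
  obtain ⟨q, hq', hql⟩ := ht.isConnected.exists_path_of_dist r v
  have heq2 := (ht.existsUnique_path r v).unique hq hq'
  have hlen := congrArg SimpleGraph.Walk.length heq2
  rw [SimpleGraph.Walk.length_concat] at hlen
  omega

private lemma tree_parent_unique (ht : G.IsTree) (r : V) {u u' v : V}
    (h : G.Adj v u) (h' : G.Adj v u')
    (hd : G.dist r u + 1 = G.dist r v) (hd' : G.dist r u' + 1 = G.dist r v) : u = u' := by
  classical
  obtain ⟨p, hp, hpl⟩ := ht.isConnected.exists_path_of_dist r u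
  obtain ⟨p', hp', hpl'⟩ := ht.isConnected.exists_path_of_dist r u'
  have hvu : v ≠ u := fun hx => by rw [hx] at hd; omega
  have hvu' : v ≠ u' := fun hx => by rw [hx] at hd'; omega
  have hvp : v ∉ p.support := by
    intro hv
    have := dist_lt_of_mem_support p hv hvu
    omega
  have hvp' : v ∉ p'.support := by
    intro hv
    have := dist_lt_of_mem_support p' hv hvu'
    omega
  have hq := concat_path p hp h.symm hvp
  have hq' := concat_path p' hp' h'.symm hvp'
  have heq := (ht.existsUnique_path r v).unique hq hq'
  have hsup := congrArg (fun w => SimpleGraph.Walk.support w.reverse) heq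
  simp only [SimpleGraph.Walk.reverse_concat, SimpleGraph.Walk.support_cons] at hsup
  obtain ⟨-, h2⟩ := List.cons_eq_cons.mp hsup
  rw [SimpleGraph.Walk.support_eq_cons p.reverse, SimpleGraph.Walk.support_eq_cons p'.reverse]
    at h2
  exact (List.cons_eq_cons.mp h2).1

private lemma tree_exists_parent (hconn : G.Connected) {r v : V} (h : G.dist r v ≠ 0) :
    ∃ u, G.Adj v u ∧ G.dist r u + 1 = G.dist r v := by
  obtain ⟨p, hpl⟩ := hconn.exists_walk_length_eq_dist r v
  have hnn : ¬ p.reverse.Nil := by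
    rw [SimpleGraph.Walk.nil_iff_length_eq, SimpleGraph.Walk.length_reverse]
    omega
  obtain ⟨u, hadj, q, hpq⟩ := SimpleGraph.Walk.not_nil_iff.mp hnn
  have hlq : q.length + 1 = G.dist r v := by
    have := congrArg SimpleGraph.Walk.length hpq
    rw [SimpleGraph.Walk.length_reverse, SimpleGraph.Walk.length_cons] at this
    omega
  have h1 : G.dist r u ≤ q.length := by
    have := SimpleGraph.dist_le q.reverse
    rwa [SimpleGraph.Walk.length_reverse] at this
  have h2 : G.dist r v ≤ G.dist r u + 1 := by
    have ht3 := hconn.dist_triangle (u := r) (v := u) (w := v)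
    have h4 : G.dist u v = 1 := SimpleGraph.dist_eq_one_iff_adj.mpr hadj.symm
    omega
  exact ⟨u, hadj, by omega⟩

private lemma fin3_cases : ∀ t : Fin 3, t = 0 ∨ t = 1 ∨ t = 2 := by decide

private lemma fin3_unique (a b c c' : Fin 3) (h1 : b ≠ a) (h2 : c ≠ a) (h3 : c ≠ b)
    (h4 : c' ≠ a) (h5 : c' ≠ b) : c = c' := by
  have H : ∀ x y : Fin 3, x ≠ y → (x : ℕ) ≠ (y : ℕ) := fun x y h hv => h (Fin.ext hv)
  have k1 := H _ _ h1
  have k2 := H _ _ h2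
  have k3 := H _ _ h3
  have k4 := H _ _ h4
  have k5 := H _ _ h5
  have ha := a.isLt
  have hb := b.isLt
  have hc := c.isLt
  have hc' := c'.isLt
  exact Fin.ext (by omega)

end Helpers

theorem stmt9 (k : ℕ) (hk : 1 ≤ k) (T : SimpleGraph (Fin (3 * k))) (ht : T.IsTree)
    (e : Fin k × Fin 3 ≃ Fin (3 * k))
    (hP : ∀ i : Fin k, T.Adj (e (i, 0)) (e (i, 1)) ∧ T.Adj (e (i, 1)) (e (i, 2))) :
    dissocNum T = 2 * k := by
  classical
  have hconn := ht.isConnected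
  obtain ⟨r⟩ : Nonempty (Fin (3 * k)) := ⟨⟨0, by omega⟩⟩
  -- adjacent vertices have distances from r differing by exactly one
  have adjE : ∀ {u v : Fin (3 * k)}, T.Adj u v →
      T.dist r u + 1 = T.dist r v ∨ T.dist r v + 1 = T.dist r u := by
    intro u v h
    have h1 : T.dist r u ≠ T.dist r v := tree_adj_dist_ne ht r h
    have h2 : T.dist u v = 1 := SimpleGraph.dist_eq_one_iff_adj.mpr h
    have h3 : T.dist v u = 1 := SimpleGraph.dist_eq_one_iff_adj.mpr h.symm
    have t1 := hconn.dist_triangle (u := r) (v := u) (w := v)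
    have t2 := hconn.dist_triangle (u := r) (v := v) (w := u)
    omega
  -- each triple has a "gate": all other vertices of the triple have their parent
  -- inside the triple
  have keyGate : ∀ i : Fin k, ∃ t : Fin 3, ∀ s : Fin 3, s ≠ t →
      ∃ s' : Fin 3, T.Adj (e (i, s)) (e (i, s')) ∧
        T.dist r (e (i, s')) + 1 = T.dist r (e (i, s)) := by
    intro i
    have hab := (hP i).1
    have hbc := (hP i).2
    have h1 := adjE hab
    have h2 := adjE hbc
    have hac : e (i, (0 : Fin 3)) ≠ e (i, 2) := by
      intro h
      have := e.injective h
      simp at this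
    rcases h1 with h1 | h1
    · rcases h2 with h2 | h2
      · refine ⟨0, ?_⟩
        intro s hs
        fin_cases s
        · simp at hs
        · exact ⟨0, hab.symm, h1⟩
        · exact ⟨1, hbc.symm, h2⟩
      · exact absurd (tree_parent_unique ht r hab.symm hbc h1 h2) hac
    · rcases h2 with h2 | h2
      · refine ⟨1, ?_⟩
        intro s hs
        fin_cases s
        · exact ⟨1, hab, h1⟩
        · simp at hs
        · exact ⟨1, hbc.symm, h2⟩
      · refine ⟨2, ?_⟩
        intro s hs
        fin_cases s
        · exact ⟨1, hab, h1⟩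
        · exact ⟨2, hbc, h2⟩
        · simp at hs
  choose g hg using keyGate
  -- the dissociation set: remove the gate of each triple
  set F : Finset (Fin k × Fin 3) := univ.filter (fun p => ¬ p.2 = g p.1) with hF
  set S : Finset (Fin (3 * k)) := F.map e.toEmbedding with hS
  have memS : ∀ v, v ∈ S ↔ (e.symm v).2 ≠ g (e.symm v).1 := by
    intro v
    simp only [hS, Finset.mem_map, hF, Finset.mem_filter, Finset.mem_univ, true_and,
      Equiv.coe_toEmbedding]
    constructor
    · rintro ⟨p, hp, rfl⟩
      simpa using hp
    · intro h
      exact ⟨e.symm v, h, e.apply_symm_apply v⟩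
  have cardS : S.card = 2 * k := by
    have h1 : S.card = F.card := Finset.card_map _
    have himg : F = univ \ (univ.image (fun i => (i, g i))) := by
      ext ⟨i, t⟩
      simp only [hF, Finset.mem_filter, Finset.mem_univ, true_and, Finset.mem_sdiff,
        Finset.mem_image, Prod.mk.injEq]
      aesop
    have hinj : Function.Injective (fun i : Fin k => (i, g i)) := by
      intro a b hab
      exact (Prod.mk.injEq _ _ _ _ ▸ hab : a = b ∧ _).1
    have hcard2 : (univ.image (fun i : Fin k => (i, g i))).card = k := by
      rw [Finset.card_image_of_injective _ hinj, Finset.card_univ, Fintype.card_fin]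
    have hcard3 : (univ : Finset (Fin k × Fin 3)).card = 3 * k := by
      rw [Finset.card_univ, Fintype.card_prod, Fintype.card_fin, Fintype.card_fin]
      omega
    rw [h1, himg, Finset.card_sdiff_of_subset (Finset.subset_univ _), hcard2, hcard3]
    omega
  -- parent of each vertex of S lies inside its own triple
  have parent_of : ∀ v, v ∈ S → ∃ t' : Fin 3,
      T.Adj v (e ((e.symm v).1, t')) ∧
        T.dist r (e ((e.symm v).1, t')) + 1 = T.dist r v := by
    intro v hv
    rw [memS] at hv
    obtain ⟨s', h1, h2⟩ := hg (e.symm v).1 (e.symm v).2 hv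
    simp only [Prod.mk.eta, Equiv.apply_symm_apply] at h1 h2
    exact ⟨s', h1, h2⟩
  have Sdissoc : IsDissocSet T S := by
    intro v hv
    rw [Set.ncard_le_one_iff (Set.toFinite _)]
    intro u u' hu hu'
    simp only [Set.mem_setOf_eq] at hu hu'
    obtain ⟨huS, huAdj⟩ := hu
    obtain ⟨huS', huAdj'⟩ := hu'
    have key : ∀ w, w ∈ S → T.Adj v w → (e.symm w).1 = (e.symm v).1 := by
      intro w hw hadj
      obtain ⟨t1, hvp1, hvp2⟩ := parent_of v hv
      obtain ⟨s1, hwp1, hwp2⟩ := parent_of w hw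
      rcases adjE hadj with hcase | hcase
      · -- v is a parent of w, so v equals w's in-triple parent
        have hvw := tree_parent_unique ht r hadj.symm hwp1 hcase hwp2
        have h5 : e.symm v = ((e.symm w).1, s1) := by rw [hvw, Equiv.symm_apply_apply]
        rw [h5]
      · -- w is a parent of v, so w equals v's in-triple parent
        have hwv := tree_parent_unique ht r hadj hvp1 hcase hvp2
        have h5 : e.symm w = ((e.symm v).1, t1) := by rw [hwv, Equiv.symm_apply_apply]
        rw [h5]
    have h1 := key u huS huAdj
    have h1' := key u' huS' huAdj'
    have hvS := (memS v).mp hv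
    have huS2 := (memS u).mp huS
    have hu'S2 := (memS u').mp huS'
    rw [h1] at huS2
    rw [h1'] at hu'S2
    have hneu : (e.symm u).2 ≠ (e.symm v).2 := by
      intro hq
      exact huAdj.ne' (e.symm.injective (Prod.ext h1 hq))
    have hneu' : (e.symm u').2 ≠ (e.symm v).2 := by
      intro hq
      exact huAdj'.ne' (e.symm.injective (Prod.ext h1' hq))
    have h2 : (e.symm u).2 = (e.symm u').2 :=
      fin3_unique (g (e.symm v).1) (e.symm v).2 (e.symm u).2 (e.symm u').2
        hvS huS2 hneu hu'S2 hneu'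
    exact e.symm.injective (Prod.ext (h1.trans h1'.symm) h2)
  -- upper bound: any dissociation set has at most two vertices in each triple
  have upper : ∀ S' : Finset (Fin (3 * k)), IsDissocSet T S' → S'.card ≤ 2 * k := by
    intro S' hS'
    have hcount := Finset.card_eq_sum_card_fiberwise
      (f := fun v => (e.symm v).1) (s := S') (t := univ) (fun x _ => Finset.mem_univ _)
    rw [hcount]
    have hb : ∀ i : Fin k, (S'.filter fun v => (e.symm v).1 = i).card ≤ 2 := by
      intro i
      by_contra hgt
      push_neg at hgt
      have hinj3 : Function.Injective (fun t : Fin 3 => e (i, t)) := by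
        intro a b hab
        have := e.injective hab
        exact (Prod.mk.injEq _ _ _ _ ▸ this : _ ∧ a = b).2
      set Tr : Finset (Fin (3 * k)) := (univ : Finset (Fin 3)).image (fun t => e (i, t))
        with hTr
      have hsub : (S'.filter fun v => (e.symm v).1 = i) ⊆ Tr := by
        intro v hv
        rw [Finset.mem_filter] at hv
        have h6 : e.symm v = (i, (e.symm v).2) := Prod.ext hv.2 rfl
        exact Finset.mem_image.mpr ⟨(e.symm v).2, Finset.mem_univ _,
          (congrArg e h6.symm).trans (e.apply_symm_apply v)⟩
      have hTrcard : Tr.card = 3 := by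
        rw [hTr, Finset.card_image_of_injective _ hinj3, Finset.card_univ, Fintype.card_fin]
      have hle : Tr.card ≤ (S'.filter fun v => (e.symm v).1 = i).card := by omega
      have heq := Finset.eq_of_subset_of_card_le hsub hle
      have hmem : ∀ t : Fin 3, e (i, t) ∈ S' := by
        intro t
        have h9 : e (i, t) ∈ Tr := Finset.mem_image.mpr ⟨t, Finset.mem_univ _, rfl⟩
        rw [← heq] at h9
        exact (Finset.mem_filter.mp h9).1
      have hd := hS' (e (i, 1)) (hmem 1)
      have hne02 : e (i, (0 : Fin 3)) ≠ e (i, 2) := by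
        intro h
        have := e.injective h
        simp at this
      have hpair : ({e (i, 0), e (i, 2)} : Set (Fin (3 * k))) ⊆
          {u | u ∈ S' ∧ T.Adj (e (i, 1)) u} := by
        intro x hx
        rcases hx with rfl | rfl
        · exact ⟨hmem 0, (hP i).1.symm⟩
        · exact ⟨hmem 2, (hP i).2⟩
      have h2 : 2 ≤ ({u | u ∈ S' ∧ T.Adj (e (i, 1)) u}).ncard := by
        exact le_trans (le_of_eq (Set.ncard_pair hne02).symm)
          (Set.ncard_le_ncard hpair (Set.toFinite _))
      omega
    refine le_trans (Finset.sum_le_sum (fun i _ => hb i)) ?_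
    rw [Finset.sum_const, Finset.card_univ, Fintype.card_fin, smul_eq_mul, mul_comm]
  -- conclude
  have hset : ∀ x ∈ {n | ∃ S : Finset (Fin (3 * k)), IsDissocSet T S ∧ S.card = n},
      x ≤ 2 * k := by
    rintro x ⟨S', h1, h2⟩
    exact h2 ▸ upper S' h1
  have hne : {n | ∃ S : Finset (Fin (3 * k)), IsDissocSet T S ∧ S.card = n}.Nonempty :=
    ⟨0, ∅, fun v hv => absurd hv (Finset.notMem_empty v), Finset.card_empty⟩
  refine le_antisymm (csSup_le hne hset) (le_csSup ⟨2 * k, hset⟩ ⟨S, Sdissoc, cardS⟩)
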